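/- arXiv:1812.08619 — 3 statements merged into one kernel-verified Lean document; each statement's English description precedes it below -/
import Mathlib

section
/- Let p : ℝ^d → ℝ be a probability density function of class C⁴ all of whose partial derivatives of order ≤ 4 are bounded. Fix a_1, a_2 > 0 with a_1 ≠ a_2, and for h > 0 set h_1 = a_1 h, h_2 = a_2 h, and let c_1 = h_2²/(h_2² − h_1²), c_2 = −h_1²/(h_2² − h_1²) (so c_1 + c_2 = 1 and c_1 h_1² + c_2 h_2² = 0; note c_1, c_2 do not depend on h). Then for every x ∈ ℝ^d there is a constant C such that for all h > 0, |c_1 (φ_{h_1} * p)(x) + c_2 (φ_{h_2} * p)(x) − p(x)| ≤ C h⁴; i.e. the bias of the two-bandwidth Richardson-extrapolated kernel density estimator is O(h⁴). -/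
open MeasureTheory ProbabilityTheory Real Filter

/-- The Gaussian kernel on `ℝ^d` with bandwidth `h`. -/
noncomputable def gaussKernel (d : ℕ) (h : ℝ) (x y : EuclideanSpace ℝ (Fin d)) : ℝ :=
  Real.exp (-‖x - y‖ ^ 2 / (2 * h ^ 2)) / (Real.sqrt (2 * Real.pi) ^ d * h ^ d)

/-- The Gaussian smoothing `(φ_h * p)(x) = ∫ K_h(x,y) p(y) dy`. -/
noncomputable def gaussSmooth (d : ℕ) (h : ℝ) (p : EuclideanSpace ℝ (Fin d) → ℝ)
    (x : EuclideanSpace ℝ (Fin d)) : ℝ :=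
  ∫ y, gaussKernel d h x y * p y

/-- Iterated partial derivative along a list of coordinate directions. -/
noncomputable def lderiv {d : ℕ} : List (Fin d) → (EuclideanSpace ℝ (Fin d) → ℝ) →
    EuclideanSpace ℝ (Fin d) → ℝ
  | [], f => f
  | i :: l, f => fun x => fderiv ℝ (lderiv l f) x (EuclideanSpace.single i 1)


section DirDeriv

variable {d : ℕ}

/-- Directional derivative operator. -/
noncomputable def rbDir (u : EuclideanSpace ℝ (Fin d)) (f : EuclideanSpace ℝ (Fin d) → ℝ) :
    EuclideanSpace ℝ (Fin d) → ℝ :=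
  fun y => fderiv ℝ f y u

/-- Iterated directional derivative. -/
noncomputable def rbDpow (u : EuclideanSpace ℝ (Fin d)) (k : ℕ)
    (f : EuclideanSpace ℝ (Fin d) → ℝ) : EuclideanSpace ℝ (Fin d) → ℝ :=
  (rbDir u)^[k] f

lemma rbDpow_succ (u : EuclideanSpace ℝ (Fin d)) (k : ℕ) (f : EuclideanSpace ℝ (Fin d) → ℝ) :
    rbDpow u (k + 1) f = rbDir u (rbDpow u k f) :=
  Function.iterate_succ_apply' _ _ _

lemma contDiff_rbDir {m : ℕ∞} {f : EuclideanSpace ℝ (Fin d) → ℝ}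
    (hf : ContDiff ℝ (m + 1) f) (u : EuclideanSpace ℝ (Fin d)) :
    ContDiff ℝ m (rbDir u f) :=
  (hf.fderiv_right le_rfl).clm_apply contDiff_const

lemma contDiff_rbDpow {m k : ℕ} {f : EuclideanSpace ℝ (Fin d) → ℝ}
    (hf : ContDiff ℝ ((m + k : ℕ) : ℕ∞) f) (u : EuclideanSpace ℝ (Fin d)) :
    ContDiff ℝ (m : ℕ∞) (rbDpow u k f) := by
  induction k generalizing m with
  | zero => simpa [rbDpow] using hf
  | succ k ih =>
    rw [rbDpow_succ]
    have : ContDiff ℝ ((m : ℕ∞) + 1) (rbDpow u k f) := by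
      have := ih (m := m + 1) (by
        convert hf using 2
        push_cast
        ring)
      exact_mod_cast this
    exact contDiff_rbDir this u

lemma contDiff_lderiv {m : ℕ} {f : EuclideanSpace ℝ (Fin d) → ℝ} :
    ∀ (l : List (Fin d)), ContDiff ℝ ((m + l.length : ℕ) : ℕ∞) f →
      ContDiff ℝ (m : ℕ∞) (lderiv l f)
  | [], hf => by simpa [lderiv] using hf
  | i :: l, hf => by
    have h1 : ContDiff ℝ (((m + 1 : ℕ) : ℕ∞)) (lderiv l f) := by
      apply contDiff_lderiv l
      convert hf using 2
      simp [List.length_cons]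
      ring
    have : ContDiff ℝ ((m : ℕ∞) + 1) (lderiv l f) := by exact_mod_cast h1
    exact contDiff_rbDir this (EuclideanSpace.single i 1)

lemma euclid_decomp (u : EuclideanSpace ℝ (Fin d)) :
    ∑ i, u i • EuclideanSpace.single i (1 : ℝ) = u := by
  ext j
  rw [WithLp.ofLp_sum, Finset.sum_apply]
  simp [EuclideanSpace.single_apply]

/-- Chain rule along a line. -/
lemma hasDerivAt_line {f : EuclideanSpace ℝ (Fin d) → ℝ} (hf : Differentiable ℝ f)
    (x u : EuclideanSpace ℝ (Fin d)) (t : ℝ) :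
    HasDerivAt (fun t : ℝ => f (x + t • u)) (rbDir u f (x + t • u)) t := by
  have hline : HasDerivAt (fun t : ℝ => x + t • u) u t := by
    simpa using ((hasDerivAt_id t).smul_const u).const_add x
  exact (hf (x + t • u)).hasFDerivAt.comp_hasDerivAt t hline

end DirDeriv

section Expansion

variable {d : ℕ}

lemma rbDpow_eq_sum (u : EuclideanSpace ℝ (Fin d)) :
    ∀ (k : ℕ) (f : EuclideanSpace ℝ (Fin d) → ℝ), ContDiff ℝ (k : ℕ∞) f →
      ∀ y, rbDpow u k f y
        = ∑ c : Fin k → Fin d, (∏ j, u (c j)) * lderiv (List.ofFn c) f y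
  | 0, f, _, y => by
    rw [Fintype.sum_unique]
    simp [rbDpow, lderiv]
  | (k + 1), f, hf, y => by
    have hfk : ContDiff ℝ (k : ℕ∞) f := hf.of_le (by exact_mod_cast Nat.cast_le.2 k.le_succ)
    have hdiff : ∀ c : Fin k → Fin d, Differentiable ℝ (lderiv (List.ofFn c) f) := by
      intro c
      have h1 : ContDiff ℝ (((1 + (List.ofFn c).length : ℕ)) : ℕ∞) f := by
        convert hf using 2
        simp [List.length_ofFn]
        ring
      exact (contDiff_lderiv (m := 1) (List.ofFn c) h1).differentiable (by simp)
    have hrw : rbDpow u k f = fun y =>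
        ∑ c : Fin k → Fin d, (∏ j, u (c j)) * lderiv (List.ofFn c) f y :=
      funext (rbDpow_eq_sum u k f hfk)
    rw [rbDpow_succ, rbDir, hrw]
    have hfd : fderiv ℝ (fun y => ∑ c : Fin k → Fin d,
        (∏ j, u (c j)) * lderiv (List.ofFn c) f y) y
        = ∑ c : Fin k → Fin d, (∏ j, u (c j)) • fderiv ℝ (lderiv (List.ofFn c) f) y := by
      rw [fderiv_fun_sum (fun c _ => ((hdiff c) y).const_mul _)]
      congr 1
      ext c
      rw [fderiv_const_mul ((hdiff c) y)]
    rw [hfd]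
    rw [ContinuousLinearMap.sum_apply]
    have hterm : ∀ c : Fin k → Fin d,
        ((∏ j, u (c j)) • fderiv ℝ (lderiv (List.ofFn c) f) y) u
          = ∑ i : Fin d, ((∏ j, u (c j)) * u i) * lderiv (i :: List.ofFn c) f y := by
      intro c
      rw [ContinuousLinearMap.smul_apply]
      have : (fderiv ℝ (lderiv (List.ofFn c) f) y) u
          = ∑ i : Fin d, u i * (fderiv ℝ (lderiv (List.ofFn c) f) y) (EuclideanSpace.single i 1) := by
        conv_lhs => rw [← euclid_decomp u]
        rw [map_sum]
        congr 1; ext i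
        rw [ContinuousLinearMap.map_smul, smul_eq_mul]
      rw [this, smul_eq_mul, Finset.mul_sum]
      congr 1; ext i
      have : (fderiv ℝ (lderiv (List.ofFn c) f) y) (EuclideanSpace.single i 1)
          = lderiv (i :: List.ofFn c) f y := rfl
      rw [this]; ring
    rw [Finset.sum_congr rfl (fun c _ => hterm c)]
    rw [Fintype.sum_equiv (Fin.consEquiv (fun _ : Fin (k+1) => Fin d)).symm
      (fun c' : Fin (k+1) → Fin d => (∏ j, u (c' j)) * lderiv (List.ofFn c') f y)
      (fun p : Fin d × (Fin k → Fin d) =>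
        ((∏ j, u (p.2 j)) * u p.1) * lderiv (p.1 :: List.ofFn p.2) f y)
      ?_]
    · rw [Fintype.sum_prod_type]
      exact Finset.sum_comm
    · intro c'
      have h0 : c' = Fin.cons (c' 0) (fun i => c' i.succ) := by
        ext j
        refine Fin.cases ?_ ?_ j <;> simp
      have hprod : (∏ j, u (c' j)) = u (c' 0) * ∏ j : Fin k, u (c' j.succ) :=
        Fin.prod_univ_succ _
      have hofn : List.ofFn c' = c' 0 :: List.ofFn (fun i => c' i.succ) := List.ofFn_succ
      simp only [Fin.consEquiv_symm_apply]
      rw [hprod, hofn]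
      show _ = (∏ x : Fin k, u (c' x.succ)) * u (c' 0) * lderiv (c' 0 :: List.ofFn (fun i => c' i.succ)) f y
      ring

end Expansion

section MVT

/-- Comparison lemma: if `f 0 = 0` and `|f'| ≤ c t^k` on `[0,1]` then
`|f s| ≤ c s^(k+1)/(k+1)` on `[0,1]`. -/
lemma rb_mvt_pow {f f' : ℝ → ℝ} (hf : ∀ t, HasDerivAt f (f' t) t) (h0 : f 0 = 0)
    {c : ℝ} (hc : 0 ≤ c) {k : ℕ}
    (hb : ∀ t ∈ Set.Icc (0 : ℝ) 1, |f' t| ≤ c * t ^ k) :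
    ∀ s ∈ Set.Icc (0 : ℝ) 1, |f s| ≤ c * s ^ (k + 1) / (k + 1) := by
  intro s hs
  have hg : ∀ t : ℝ, HasDerivAt (fun t => c * t ^ (k + 1) / (k + 1)) (c * t ^ k) t := by
    intro t
    have h1 : HasDerivAt (fun t : ℝ => t ^ (k + 1)) ((k + 1 : ℕ) * t ^ k) t :=
      hasDerivAt_pow (k + 1) t
    have h2 := (h1.const_mul c).div_const ((k : ℝ) + 1)
    refine h2.congr_deriv ?_
    have : ((k : ℝ) + 1) ≠ 0 := by positivity
    field_simp
    push_cast
    ring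
  -- upper bound : f s ≤ c s^(k+1)/(k+1)
  have mono : ∀ (F F' : ℝ → ℝ), (∀ t, HasDerivAt F (F' t) t) →
      (∀ t ∈ Set.Icc (0:ℝ) 1, 0 ≤ F' t) → F 0 ≤ F s := by
    intro F F' hF hF'
    have hmono : MonotoneOn F (Set.Icc (0:ℝ) 1) := by
      apply monotoneOn_of_deriv_nonneg (convex_Icc 0 1)
      · exact fun t _ => ((hF t).differentiableAt).continuousAt.continuousWithinAt
      · intro t ht
        exact ((hF t).differentiableAt).differentiableWithinAt
      · intro t ht
        rw [interior_Icc] at ht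
        rw [(hF t).deriv]
        exact hF' t ⟨le_of_lt ht.1, le_of_lt ht.2⟩
    exact hmono ⟨le_refl 0, zero_le_one⟩ hs hs.1
  have hupper : f s ≤ c * s ^ (k + 1) / (k + 1) := by
    have := mono (fun t => c * t ^ (k + 1) / (k + 1) - f t) (fun t => c * t ^ k - f' t)
      (fun t => (hg t).sub (hf t))
      (fun t ht => by
        show 0 ≤ c * t ^ k - f' t
        have := abs_le.1 (hb t ht)
        linarith [this.2])
    simp only [h0] at this
    norm_num at this
    linarith
  have hlower : -(c * s ^ (k + 1) / (k + 1)) ≤ f s := by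
    have := mono (fun t => c * t ^ (k + 1) / (k + 1) + f t) (fun t => c * t ^ k + f' t)
      (fun t => (hg t).add (hf t))
      (fun t ht => by
        show 0 ≤ c * t ^ k + f' t
        have := abs_le.1 (hb t ht)
        linarith [this.1])
    simp only [h0] at this
    norm_num at this
    linarith
  exact abs_le.2 ⟨hlower, hupper⟩

end MVT

section Taylor

variable {d : ℕ}

lemma rbDir_neg (g : EuclideanSpace ℝ (Fin d) → ℝ) (u y) :
    rbDir (-u) g y = -(rbDir u g y) := by
  simp [rbDir]

lemma rb_taylor_sym {p : EuclideanSpace ℝ (Fin d) → ℝ} (hp : ContDiff ℝ 4 p)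
    (x u : EuclideanSpace ℝ (Fin d)) {M : ℝ}
    (hM : ∀ y, |rbDpow u 4 p y| ≤ M) :
    |(p (x + u) + p (x - u)) / 2 - p x - rbDpow u 2 p x / 2| ≤ M / 24 := by
  have hM0 : 0 ≤ M := le_trans (abs_nonneg _) (hM x)
  have hcast : ∀ m k : ℕ, m + k = 4 → ContDiff ℝ ((m + k : ℕ) : ℕ∞) p := by
    intro m k hmk; rw [hmk]; exact_mod_cast hp
  have hD0 : Differentiable ℝ (rbDpow u 0 p) := by
    simpa [rbDpow] using hp.differentiable (by norm_num)
  have hD1 : Differentiable ℝ (rbDpow u 1 p) :=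
    (contDiff_rbDpow (m := 3) (k := 1) (hcast 3 1 rfl) u).differentiable (by norm_num)
  have hD2 : Differentiable ℝ (rbDpow u 2 p) :=
    (contDiff_rbDpow (m := 2) (k := 2) (hcast 2 2 rfl) u).differentiable (by norm_num)
  have hD3 : Differentiable ℝ (rbDpow u 3 p) :=
    (contDiff_rbDpow (m := 1) (k := 3) (hcast 1 3 rfl) u).differentiable (by norm_num)
  -- derivative along the two branches
  have hplus : ∀ (k : ℕ), Differentiable ℝ (rbDpow u k p) → ∀ t : ℝ,
      HasDerivAt (fun t : ℝ => rbDpow u k p (x + t • u)) (rbDpow u (k+1) p (x + t • u)) t := by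
    intro k hk t
    rw [rbDpow_succ]
    exact hasDerivAt_line hk x u t
  have hminus : ∀ (k : ℕ), Differentiable ℝ (rbDpow u k p) → ∀ t : ℝ,
      HasDerivAt (fun t : ℝ => rbDpow u k p (x - t • u)) (-(rbDpow u (k+1) p (x - t • u))) t := by
    intro k hk t
    have he : (fun t : ℝ => rbDpow u k p (x + t • (-u)))
        = fun t : ℝ => rbDpow u k p (x - t • u) := by
      funext s; rw [smul_neg, ← sub_eq_add_neg]
    have h1 := hasDerivAt_line hk x (-u) t
    rw [he] at h1
    have h2 : rbDir (-u) (rbDpow u k p) (x + t • (-u)) = -(rbDpow u (k+1) p (x - t • u)) := by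
      rw [rbDir_neg, smul_neg, ← sub_eq_add_neg, ← rbDpow_succ]
    rwa [h2] at h1
  set D2 : ℝ := rbDpow u 2 p x with hD2def
  set ψ0 : ℝ → ℝ := fun t => (p (x + t • u) + p (x - t • u)) / 2 - p x - t ^ 2 / 2 * D2 with hψ0
  set ψ1 : ℝ → ℝ := fun t =>
    (rbDpow u 1 p (x + t • u) - rbDpow u 1 p (x - t • u)) / 2 - t * D2 with hψ1
  set ψ2 : ℝ → ℝ := fun t =>
    (rbDpow u 2 p (x + t • u) + rbDpow u 2 p (x - t • u)) / 2 - D2 with hψ2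
  set ψ3 : ℝ → ℝ := fun t =>
    (rbDpow u 3 p (x + t • u) - rbDpow u 3 p (x - t • u)) / 2 with hψ3
  set ψ4 : ℝ → ℝ := fun t =>
    (rbDpow u 4 p (x + t • u) + rbDpow u 4 p (x - t • u)) / 2 with hψ4
  have h0 : ∀ t : ℝ, HasDerivAt ψ0 (ψ1 t) t := by
    intro t
    have ha := hplus 0 hD0 t
    have hb := hminus 0 hD0 t
    norm_num at ha hb
    have hpoly : HasDerivAt (fun t : ℝ => t ^ 2 / 2 * D2) (t * D2) t := by
      have := ((hasDerivAt_pow 2 t).div_const 2).mul_const D2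
      refine this.congr_deriv ?_
      push_cast; ring
    have := (((ha.add hb).div_const 2).sub (hasDerivAt_const t (p x))).sub hpoly
    have hgoal : ψ1 t = (rbDpow u 1 p (x + t • u) + -rbDpow u 1 p (x - t • u)) / 2 - 0 - t * D2 := by
      rw [hψ1]; ring
    rw [hgoal]
    exact this
  have h1 : ∀ t : ℝ, HasDerivAt ψ1 (ψ2 t) t := by
    intro t
    have ha := hplus 1 hD1 t
    have hb := hminus 1 hD1 t
    norm_num at ha hb
    have hpoly : HasDerivAt (fun t : ℝ => t * D2) D2 t := by
      simpa using (hasDerivAt_id t).mul_const D2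
    have := ((ha.sub hb).div_const 2).sub hpoly
    refine this.congr_deriv ?_
    ring
  have h2 : ∀ t : ℝ, HasDerivAt ψ2 (ψ3 t) t := by
    intro t
    have ha := hplus 2 hD2 t
    have hb := hminus 2 hD2 t
    norm_num at ha hb
    have := ((ha.add hb).div_const 2).sub (hasDerivAt_const t D2)
    refine this.congr_deriv ?_
    ring
  have h3 : ∀ t : ℝ, HasDerivAt ψ3 (ψ4 t) t := by
    intro t
    have ha := hplus 3 hD3 t
    have hb := hminus 3 hD3 t
    norm_num at ha hb
    have := (ha.sub hb).div_const 2
    refine this.congr_deriv ?_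
    ring
  have hb4 : ∀ t ∈ Set.Icc (0:ℝ) 1, |ψ4 t| ≤ M := by
    intro t _
    rw [hψ4]
    have h1 := hM (x + t • u)
    have h2 := hM (x - t • u)
    have h3 := abs_add_le (rbDpow u 4 p (x + t • u)) (rbDpow u 4 p (x - t • u))
    rw [abs_div, abs_two]
    linarith
  have hz3 : ψ3 0 = 0 := by simp [hψ3]
  have hz2 : ψ2 0 = 0 := by simp [hψ2, hD2def]
  have hz1 : ψ1 0 = 0 := by simp [hψ1]
  have hz0 : ψ0 0 = 0 := by simp [hψ0]
  have b3 : ∀ s ∈ Set.Icc (0:ℝ) 1, |ψ3 s| ≤ M * s ^ 1 := by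
    intro s hs
    have := rb_mvt_pow h3 hz3 hM0 (k := 0) (fun t ht => by simpa using hb4 t ht) s hs
    norm_num at this ⊢
    linarith
  have b2 : ∀ s ∈ Set.Icc (0:ℝ) 1, |ψ2 s| ≤ M / 2 * s ^ 2 := by
    intro s hs
    have := rb_mvt_pow h2 hz2 hM0 (k := 1) b3 s hs
    norm_num at this
    linarith
  have b1 : ∀ s ∈ Set.Icc (0:ℝ) 1, |ψ1 s| ≤ M / 6 * s ^ 3 := by
    intro s hs
    have := rb_mvt_pow h1 hz1 (by positivity : (0:ℝ) ≤ M / 2) (k := 2) b2 s hs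
    norm_num at this
    linarith
  have b0 : |ψ0 1| ≤ M / 24 := by
    have := rb_mvt_pow h0 hz0 (by positivity : (0:ℝ) ≤ M / 6) (k := 3) b1 1
      ⟨zero_le_one, le_refl 1⟩
    norm_num at this
    linarith
  have : ψ0 1 = (p (x + u) + p (x - u)) / 2 - p x - rbDpow u 2 p x / 2 := by
    simp [hψ0, hD2def]
    ring
  rwa [this] at b0

end Taylor

section Gauss

open scoped Real

variable {d : ℕ}

lemma rb_int_exp (b : ℝ) (hb : 0 < b) :
    Integrable (fun w : EuclideanSpace ℝ (Fin d) => Real.exp (-b * ‖w‖ ^ 2)) := by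
  have h := (GaussianFourier.integrable_cexp_neg_mul_sq_norm_add (V := EuclideanSpace ℝ (Fin d))
    (b := (b : ℂ)) (by simpa using hb) 0 0).norm
  convert h using 2 with w
  simp only [Complex.norm_exp]
  rw [show (-(b:ℂ) * (‖w‖:ℂ) ^ 2 + 0 * ((inner ℝ (0 : EuclideanSpace ℝ (Fin d)) w : ℝ) : ℂ))
      = ((-b * ‖w‖ ^ 2 : ℝ) : ℂ) by push_cast; ring]
  rw [Complex.ofReal_re]

lemma rb_int_gauss_val :
    ∫ w : EuclideanSpace ℝ (Fin d), Real.exp (-(1/2) * ‖w‖ ^ 2)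
      = Real.sqrt (2 * π) ^ d := by
  have h := GaussianFourier.integral_rexp_neg_mul_sq_norm (V := EuclideanSpace ℝ (Fin d))
    (b := (1/2 : ℝ)) (by norm_num)
  rw [h, finrank_euclideanSpace_fin]
  rw [show (π / (1/2 : ℝ)) = 2 * π by ring]
  rw [show ((d : ℝ) / 2) = (1/2) * (d : ℝ) by ring]
  rw [Real.rpow_mul (by positivity), Real.rpow_natCast]
  congr 1
  rw [Real.sqrt_eq_rpow]

lemma rb_norm_pow_le (w : EuclideanSpace ℝ (Fin d)) :
    ‖w‖ ^ 4 * Real.exp (-(1/2) * ‖w‖ ^ 2) ≤ 32 * Real.exp (-(1/4) * ‖w‖ ^ 2) := by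
  set x : ℝ := ‖w‖ ^ 2 / 4 with hx
  have hx0 : 0 ≤ x := by positivity
  have hexp : x ^ 2 / 2 ≤ Real.exp x := by
    have := Real.sum_le_exp_of_nonneg hx0 3
    simp [Finset.sum_range_succ] at this
    nlinarith [this, hx0]
  have h1 : ‖w‖ ^ 4 = 16 * x ^ 2 := by rw [hx]; ring
  have h2 : ‖w‖ ^ 4 ≤ 32 * Real.exp x := by rw [h1]; nlinarith
  have h3 : Real.exp (-(1/2) * ‖w‖ ^ 2) = Real.exp (-(1/4) * ‖w‖ ^ 2) / Real.exp x := by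
    rw [← Real.exp_sub]; congr 1; rw [hx]; ring
  rw [h3]
  rw [div_eq_mul_inv, ← mul_assoc]
  have hepos := Real.exp_pos x
  calc ‖w‖ ^ 4 * Real.exp (-(1/4) * ‖w‖ ^ 2) * (Real.exp x)⁻¹
      ≤ 32 * Real.exp x * Real.exp (-(1/4) * ‖w‖ ^ 2) * (Real.exp x)⁻¹ := by
        apply mul_le_mul_of_nonneg_right ?_ (by positivity)
        apply mul_le_mul_of_nonneg_right h2 (Real.exp_pos _).le
    _ = 32 * Real.exp (-(1/4) * ‖w‖ ^ 2) := by
        field_simp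
  -- done

lemma rb_norm_sq_le (w : EuclideanSpace ℝ (Fin d)) :
    ‖w‖ ^ 2 * Real.exp (-(1/2) * ‖w‖ ^ 2) ≤ 4 * Real.exp (-(1/4) * ‖w‖ ^ 2) := by
  set x : ℝ := ‖w‖ ^ 2 / 4 with hx
  have hx0 : 0 ≤ x := by positivity
  have hexp : x ≤ Real.exp x := by linarith [Real.add_one_le_exp x]
  have h2 : ‖w‖ ^ 2 ≤ 4 * Real.exp x := by
    have : ‖w‖ ^ 2 = 4 * x := by rw [hx]; ring
    rw [this]; nlinarith
  have h3 : Real.exp (-(1/2) * ‖w‖ ^ 2) = Real.exp (-(1/4) * ‖w‖ ^ 2) / Real.exp x := by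
    rw [← Real.exp_sub]; congr 1; rw [hx]; ring
  rw [h3, div_eq_mul_inv, ← mul_assoc]
  have hepos := Real.exp_pos x
  calc ‖w‖ ^ 2 * Real.exp (-(1/4) * ‖w‖ ^ 2) * (Real.exp x)⁻¹
      ≤ 4 * Real.exp x * Real.exp (-(1/4) * ‖w‖ ^ 2) * (Real.exp x)⁻¹ := by
        apply mul_le_mul_of_nonneg_right ?_ (by positivity)
        apply mul_le_mul_of_nonneg_right h2 (Real.exp_pos _).le
    _ = 4 * Real.exp (-(1/4) * ‖w‖ ^ 2) := by field_simp

lemma rb_int_gauss_pow4 :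
    Integrable (fun w : EuclideanSpace ℝ (Fin d) =>
      Real.exp (-(1/2) * ‖w‖ ^ 2) * ‖w‖ ^ 4) := by
  apply Integrable.mono' ((rb_int_exp (1/4 : ℝ) (by norm_num)).const_mul 32)
  · apply Continuous.aestronglyMeasurable
    continuity
  · filter_upwards with w
    rw [Real.norm_eq_abs, abs_of_nonneg (by positivity)]
    calc Real.exp (-(1/2) * ‖w‖ ^ 2) * ‖w‖ ^ 4
        = ‖w‖ ^ 4 * Real.exp (-(1/2) * ‖w‖ ^ 2) := by ring
      _ ≤ 32 * Real.exp (-(1/4) * ‖w‖ ^ 2) := rb_norm_pow_le w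

lemma rb_int_gauss_pow2 :
    Integrable (fun w : EuclideanSpace ℝ (Fin d) =>
      Real.exp (-(1/2) * ‖w‖ ^ 2) * ‖w‖ ^ 2) := by
  apply Integrable.mono' ((rb_int_exp (1/4 : ℝ) (by norm_num)).const_mul 4)
  · apply Continuous.aestronglyMeasurable
    continuity
  · filter_upwards with w
    rw [Real.norm_eq_abs, abs_of_nonneg (by positivity)]
    calc Real.exp (-(1/2) * ‖w‖ ^ 2) * ‖w‖ ^ 2
        = ‖w‖ ^ 2 * Real.exp (-(1/2) * ‖w‖ ^ 2) := by ring
      _ ≤ 4 * Real.exp (-(1/4) * ‖w‖ ^ 2) := rb_norm_sq_le w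

end Gauss

section Bounds

variable {d : ℕ}

lemma rb_coord_le_norm (u : EuclideanSpace ℝ (Fin d)) (i : Fin d) : |u i| ≤ ‖u‖ := by
  rw [EuclideanSpace.norm_eq]
  have h1 : |u i| = Real.sqrt (‖u i‖ ^ 2) := by
    rw [Real.sqrt_sq_eq_abs]; simp
  rw [h1]
  apply Real.sqrt_le_sqrt
  exact Finset.single_le_sum (f := fun j => ‖u j‖ ^ 2) (fun j _ => by positivity)
    (Finset.mem_univ i)

lemma rb_dpow_bound {p : EuclideanSpace ℝ (Fin d) → ℝ} {k : ℕ}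
    (hp : ContDiff ℝ (k : ℕ∞) p) {B : ℝ} (hBnn : 0 ≤ B)
    (hB : ∀ (c : Fin k → Fin d) (y : EuclideanSpace ℝ (Fin d)),
      |lderiv (List.ofFn c) p y| ≤ B)
    (u y : EuclideanSpace ℝ (Fin d)) :
    |rbDpow u k p y| ≤ (d : ℝ) ^ k * B * ‖u‖ ^ k := by
  rw [rbDpow_eq_sum u k p hp y]
  calc |∑ c : Fin k → Fin d, (∏ j, u (c j)) * lderiv (List.ofFn c) p y|
      ≤ ∑ c : Fin k → Fin d, |(∏ j, u (c j)) * lderiv (List.ofFn c) p y| :=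
        Finset.abs_sum_le_sum_abs _ _
    _ ≤ ∑ _c : Fin k → Fin d, ‖u‖ ^ k * B := by
        apply Finset.sum_le_sum
        intro c _
        rw [abs_mul]
        apply mul_le_mul ?_ (hB c y) (abs_nonneg _) (by positivity)
        rw [Finset.abs_prod]
        calc ∏ j, |u (c j)| ≤ ∏ _j : Fin k, ‖u‖ :=
              Finset.prod_le_prod (fun j _ => abs_nonneg _)
                (fun j _ => rb_coord_le_norm u (c j))
          _ = ‖u‖ ^ k := by simp
    _ = (d : ℝ) ^ k * B * ‖u‖ ^ k := by
        rw [Finset.sum_const]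
        simp [Fintype.card_fun]
        ring
  -- done

lemma rb_dpow_smul {p : EuclideanSpace ℝ (Fin d) → ℝ} {k : ℕ}
    (hp : ContDiff ℝ (k : ℕ∞) p) (s : ℝ) (w y : EuclideanSpace ℝ (Fin d)) :
    rbDpow (s • w) k p y = s ^ k * rbDpow w k p y := by
  rw [rbDpow_eq_sum (s • w) k p hp y, rbDpow_eq_sum w k p hp y, Finset.mul_sum]
  congr 1
  ext c
  have hcoord : ∀ j : Fin k, (s • w) (c j) = s * w (c j) := fun j => rfl
  simp only [hcoord]
  rw [Finset.prod_mul_distrib, Finset.prod_const]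
  simp
  ring

end Bounds

section Key

open Real

variable {d : ℕ}

lemma rb_key {p : EuclideanSpace ℝ (Fin d) → ℝ} (hp : ContDiff ℝ 4 p)
    {B0 B2 B4 : ℝ} (hB2nn : 0 ≤ B2) (hB4nn : 0 ≤ B4)
    (hB0 : ∀ y, |p y| ≤ B0)
    (hB2 : ∀ (c : Fin 2 → Fin d) (y : EuclideanSpace ℝ (Fin d)),
      |lderiv (List.ofFn c) p y| ≤ B2)
    (hB4 : ∀ (c : Fin 4 → Fin d) (y : EuclideanSpace ℝ (Fin d)),
      |lderiv (List.ofFn c) p y| ≤ B4)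
    (x : EuclideanSpace ℝ (Fin d)) :
    ∃ I K : ℝ, 0 ≤ K ∧ ∀ s : ℝ, 0 < s →
      |gaussSmooth d s p x - p x - s ^ 2 * I| ≤ K * s ^ 4 := by
  have hp2 : ContDiff ℝ ((2 : ℕ) : ℕ∞) p := hp.of_le (by norm_num)
  have hp4 : ContDiff ℝ ((4 : ℕ) : ℕ∞) p := by exact_mod_cast hp
  set gs : EuclideanSpace ℝ (Fin d) → ℝ := fun w => Real.exp (-(1/2) * ‖w‖ ^ 2) with hgsdef
  set cd : ℝ := Real.sqrt (2 * π) ^ d with hcddef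
  have hcd : 0 < cd := pow_pos (Real.sqrt_pos.2 (by positivity)) d
  set Q : EuclideanSpace ℝ (Fin d) → ℝ := fun w => rbDpow w 2 p x with hQdef
  have hQ : ∀ w, |Q w| ≤ (d : ℝ) ^ 2 * B2 * ‖w‖ ^ 2 :=
    fun w => rb_dpow_bound hp2 hB2nn hB2 w x
  have hQcont : Continuous Q := by
    have he : Q = fun w => ∑ c : Fin 2 → Fin d,
        (∏ j, w (c j)) * lderiv (List.ofFn c) p x :=
      funext fun w => rbDpow_eq_sum w 2 p hp2 x
    rw [he]
    apply continuous_finset_sum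
    intro c _
    apply Continuous.mul ?_ continuous_const
    apply continuous_finset_prod
    intro j _
    exact (EuclideanSpace.proj (c j)).continuous
  have hgs_cont : Continuous gs := by
    apply Real.continuous_exp.comp
    continuity
  have hgs_nonneg : ∀ w, 0 ≤ gs w := fun w => (Real.exp_pos _).le
  have hgs_int : Integrable gs := rb_int_exp (1/2 : ℝ) (by norm_num)
  set M4 : ℝ := ∫ w : EuclideanSpace ℝ (Fin d), gs w * ‖w‖ ^ 4 with hM4def
  have hM4nn : 0 ≤ M4 :=
    integral_nonneg fun w => mul_nonneg (hgs_nonneg w) (by positivity)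
  refine ⟨(∫ w, gs w * Q w) / (2 * cd), cd⁻¹ * ((d : ℝ) ^ 4 * B4 / 24) * M4,
    by positivity, fun s hs => ?_⟩
  have hsne : s ≠ 0 := ne_of_gt hs
  -- Step 1 : gaussSmooth d s p x = cd⁻¹ * ∫ w, gs w * p (x + s • w)
  have step1 : gaussSmooth d s p x = cd⁻¹ * ∫ w, gs w * p (x + s • w) := by
    rw [gaussSmooth]
    have ht := (integral_add_right_eq_self (μ := volume)
      (fun y => gaussKernel d s x y * p y) x).symm
    rw [ht]
    have h1 : (fun v : EuclideanSpace ℝ (Fin d) => gaussKernel d s x (v + x) * p (v + x))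
        = fun v => Real.exp (-‖v‖ ^ 2 / (2 * s ^ 2)) / (cd * s ^ d) * p (x + v) := by
      funext v
      rw [gaussKernel]
      have h2 : x - (v + x) = -v := by abel
      rw [h2, norm_neg, add_comm x v, hcddef]
    rw [h1]
    have h2 := Measure.integral_comp_smul_of_nonneg (μ := volume)
      (fun v : EuclideanSpace ℝ (Fin d) =>
        Real.exp (-‖v‖ ^ 2 / (2 * s ^ 2)) / (cd * s ^ d) * p (x + v)) s (hR := hs.le)
    rw [finrank_euclideanSpace_fin, smul_eq_mul] at h2
    have h3 : (fun w : EuclideanSpace ℝ (Fin d) =>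
        Real.exp (-‖s • w‖ ^ 2 / (2 * s ^ 2)) / (cd * s ^ d) * p (x + s • w))
        = fun w => (cd * s ^ d)⁻¹ * (gs w * p (x + s • w)) := by
      funext w
      have hn : ‖s • w‖ ^ 2 = s ^ 2 * ‖w‖ ^ 2 := by
        rw [norm_smul, Real.norm_eq_abs, abs_of_pos hs, mul_pow]
      rw [hn, hgsdef]
      have : -(s ^ 2 * ‖w‖ ^ 2) / (2 * s ^ 2) = -(1/2) * ‖w‖ ^ 2 := by
        field_simp
      rw [this]
      ring
    rw [h3] at h2
    rw [integral_const_mul] at h2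
    -- h2 : ∫ v, f v computed...
    have hsd : (0:ℝ) < s ^ d := pow_pos hs d
    have h4 : ∫ v : EuclideanSpace ℝ (Fin d),
        Real.exp (-‖v‖ ^ 2 / (2 * s ^ 2)) / (cd * s ^ d) * p (x + v)
        = s ^ d * ((cd * s ^ d)⁻¹ * ∫ w, gs w * p (x + s • w)) := by
      have h2' := h2.symm
      rw [← h2']
      field_simp
    rw [h4]
    rw [mul_inv]
    field_simp
  -- Integrability facts
  have hmap_cont : ∀ t : ℝ, Continuous fun w : EuclideanSpace ℝ (Fin d) => p (x + t • w) :=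
    fun t => hp.continuous.comp (continuous_const.add (continuous_id.const_smul t))
  have int1 : Integrable (fun w => gs w * p (x + s • w)) := by
    apply Integrable.mono' (hgs_int.const_mul B0)
    · exact (hgs_cont.mul (hmap_cont s)).aestronglyMeasurable
    · filter_upwards with w
      rw [Real.norm_eq_abs, abs_mul, abs_of_nonneg (hgs_nonneg w)]
      calc gs w * |p (x + s • w)| ≤ gs w * B0 :=
            mul_le_mul_of_nonneg_left (hB0 _) (hgs_nonneg w)
        _ = B0 * gs w := by ring
  have int1' : Integrable (fun w => gs w * p (x - s • w)) := by
    apply Integrable.mono' (hgs_int.const_mul B0)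
    · apply Continuous.aestronglyMeasurable
      apply hgs_cont.mul
      apply hp.continuous.comp
      exact continuous_const.sub (continuous_id.const_smul s)
    · filter_upwards with w
      rw [Real.norm_eq_abs, abs_mul, abs_of_nonneg (hgs_nonneg w)]
      calc gs w * |p (x - s • w)| ≤ gs w * B0 :=
            mul_le_mul_of_nonneg_left (hB0 _) (hgs_nonneg w)
        _ = B0 * gs w := by ring
  have intQ : Integrable (fun w => gs w * Q w) := by
    apply Integrable.mono' (rb_int_gauss_pow2.const_mul ((d : ℝ) ^ 2 * B2))
    · exact (hgs_cont.mul hQcont).aestronglyMeasurable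
    · filter_upwards with w
      rw [Real.norm_eq_abs, abs_mul, abs_of_nonneg (hgs_nonneg w)]
      calc gs w * |Q w| ≤ gs w * ((d : ℝ) ^ 2 * B2 * ‖w‖ ^ 2) :=
            mul_le_mul_of_nonneg_left (hQ w) (hgs_nonneg w)
        _ = (d : ℝ) ^ 2 * B2 * (Real.exp (-(1/2) * ‖w‖ ^ 2) * ‖w‖ ^ 2) := by
            rw [hgsdef]; ring
  have intpx : Integrable (fun w => gs w * p x) := hgs_int.mul_const (p x)
  set r : EuclideanSpace ℝ (Fin d) → ℝ :=
    fun w => (p (x + s • w) + p (x - s • w)) / 2 - p x - s ^ 2 / 2 * Q w with hrdef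
  have intr : Integrable (fun w => gs w * r w) := by
    have hfun : (fun w => gs w * r w)
        = fun w => ((gs w * p (x + s • w) + gs w * p (x - s • w)) / 2
            - gs w * p x - s ^ 2 / 2 * (gs w * Q w)) := by
      funext w
      rw [hrdef]
      ring
    rw [hfun]
    exact (((int1.add int1').div_const 2).sub intpx).sub (intQ.const_mul _)
  -- symmetrization
  have hsym : ∫ w, gs w * p (x - s • w) = ∫ w, gs w * p (x + s • w) := by
    have h := integral_neg_eq_self (fun w => gs w * p (x + s • w)) (volume)
    have he : (fun w : EuclideanSpace ℝ (Fin d) => gs (-w) * p (x + s • (-w)))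
        = fun w => gs w * p (x - s • w) := by
      funext w
      rw [hgsdef]
      simp only [norm_neg, smul_neg]
      rw [← sub_eq_add_neg]
    rw [← he]
    exact h
  -- main expansion of the integral
  have hJ : ∫ w, gs w * p (x + s • w)
      = cd * p x + s ^ 2 / 2 * (∫ w, gs w * Q w) + ∫ w, gs w * r w := by
    have e2 : ∫ w, gs w * p x = cd * p x := by
      rw [integral_mul_const, hgsdef, rb_int_gauss_val, hcddef]
    have e3 : (fun w => (gs w * p (x + s • w) + gs w * p (x - s • w)) / 2)
        = fun w => gs w * p x + (s ^ 2 / 2 * (gs w * Q w) + gs w * r w) := by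
      funext w
      rw [hrdef]
      ring
    have e4 : ∫ w, (gs w * p (x + s • w) + gs w * p (x - s • w)) / 2
        = ∫ w, gs w * p (x + s • w) := by
      rw [integral_div, integral_add int1 int1', hsym]
      ring
    have e1 : ∫ w, (gs w * p x + (s ^ 2 / 2 * (gs w * Q w) + gs w * r w))
        = (∫ w, gs w * p x) + (s ^ 2 / 2 * (∫ w, gs w * Q w) + ∫ w, gs w * r w) := by
      have i1 : Integrable (fun w => s ^ 2 / 2 * (gs w * Q w)) := intQ.const_mul _
      have i2 : Integrable (fun w => s ^ 2 / 2 * (gs w * Q w) + gs w * r w) := i1.add intr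
      rw [integral_add intpx i2, integral_add i1 intr, integral_const_mul]
    calc ∫ w, gs w * p (x + s • w)
        = ∫ w, (gs w * p (x + s • w) + gs w * p (x - s • w)) / 2 := e4.symm
      _ = ∫ w, (gs w * p x + (s ^ 2 / 2 * (gs w * Q w) + gs w * r w)) := by rw [e3]
      _ = (∫ w, gs w * p x) + (s ^ 2 / 2 * (∫ w, gs w * Q w) + ∫ w, gs w * r w) := e1
      _ = cd * p x + s ^ 2 / 2 * (∫ w, gs w * Q w) + ∫ w, gs w * r w := by rw [e2]; ring
  -- bound on the remainder integral
  have hrle : ∀ w, |r w| ≤ (d : ℝ) ^ 4 * B4 * s ^ 4 * ‖w‖ ^ 4 / 24 := by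
    intro w
    have hM : ∀ y, |rbDpow (s • w) 4 p y| ≤ (d : ℝ) ^ 4 * B4 * ‖s • w‖ ^ 4 :=
      fun y => rb_dpow_bound hp4 hB4nn hB4 (s • w) y
    have ht := rb_taylor_sym hp x (s • w) hM
    have h2 : rbDpow (s • w) 2 p x = s ^ 2 * Q w := by
      rw [rb_dpow_smul hp2 s w x, hQdef]
    have hn : ‖s • w‖ ^ 4 = s ^ 4 * ‖w‖ ^ 4 := by
      rw [norm_smul, Real.norm_eq_abs, abs_of_pos hs, mul_pow]
    rw [h2, hn] at ht
    have he : r w = (p (x + s • w) + p (x - s • w)) / 2 - p x - s ^ 2 * Q w / 2 := by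
      rw [hrdef]; ring
    rw [he]
    calc |(p (x + s • w) + p (x - s • w)) / 2 - p x - s ^ 2 * Q w / 2|
        ≤ (d : ℝ) ^ 4 * B4 * (s ^ 4 * ‖w‖ ^ 4) / 24 := ht
      _ = (d : ℝ) ^ 4 * B4 * s ^ 4 * ‖w‖ ^ 4 / 24 := by ring
  have hRb : |∫ w, gs w * r w| ≤ (d : ℝ) ^ 4 * B4 / 24 * M4 * s ^ 4 := by
    have h1 : |∫ w, gs w * r w| ≤ ∫ w, |gs w * r w| := by
      have := norm_integral_le_integral_norm (μ := volume) (fun w => gs w * r w)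
      simpa only [Real.norm_eq_abs] using this
    have h2 : ∫ w, |gs w * r w|
        ≤ ∫ w, (d : ℝ) ^ 4 * B4 * s ^ 4 / 24 * (gs w * ‖w‖ ^ 4) := by
      apply integral_mono intr.abs (rb_int_gauss_pow4.const_mul _)
      intro w
      show |gs w * r w| ≤ (d : ℝ) ^ 4 * B4 * s ^ 4 / 24 * (gs w * ‖w‖ ^ 4)
      rw [abs_mul, abs_of_nonneg (hgs_nonneg w)]
      calc gs w * |r w| ≤ gs w * ((d : ℝ) ^ 4 * B4 * s ^ 4 * ‖w‖ ^ 4 / 24) :=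
            mul_le_mul_of_nonneg_left (hrle w) (hgs_nonneg w)
        _ = (d : ℝ) ^ 4 * B4 * s ^ 4 / 24 * (gs w * ‖w‖ ^ 4) := by ring
    have h3 : ∫ w, (d : ℝ) ^ 4 * B4 * s ^ 4 / 24 * (gs w * ‖w‖ ^ 4)
        = (d : ℝ) ^ 4 * B4 * s ^ 4 / 24 * M4 := by
      rw [integral_const_mul, hM4def]
    calc |∫ w, gs w * r w| ≤ ∫ w, |gs w * r w| := h1
      _ ≤ (d : ℝ) ^ 4 * B4 * s ^ 4 / 24 * M4 := by rw [← h3]; exact h2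
      _ = (d : ℝ) ^ 4 * B4 / 24 * M4 * s ^ 4 := by ring
  -- final assembly
  have hfinal : gaussSmooth d s p x - p x - s ^ 2 * ((∫ w, gs w * Q w) / (2 * cd))
      = cd⁻¹ * ∫ w, gs w * r w := by
    rw [step1, hJ]
    field_simp
    ring
  rw [hfinal, abs_mul, abs_of_nonneg (inv_nonneg.2 hcd.le)]
  calc cd⁻¹ * |∫ w, gs w * r w|
      ≤ cd⁻¹ * ((d : ℝ) ^ 4 * B4 / 24 * M4 * s ^ 4) :=
        mul_le_mul_of_nonneg_left hRb (inv_nonneg.2 hcd.le)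
    _ = cd⁻¹ * ((d : ℝ) ^ 4 * B4 / 24) * M4 * s ^ 4 := by ring

end Key

/-- the bias of the two-bandwidth Richardson-extrapolated kernel density
estimator, with bandwidths `h₁ = a₁ h`, `h₂ = a₂ h` and weights
`c₁ = h₂²/(h₂² − h₁²)`, `c₂ = −h₁²/(h₂² − h₁²)`, is `O(h⁴)`:
`|c₁ (φ_{h₁} * p)(x) + c₂ (φ_{h₂} * p)(x) − p(x)| ≤ C h⁴`. -/
theorem richardson_bias_order_four {d : ℕ} (hd : 1 ≤ d)
    (p : EuclideanSpace ℝ (Fin d) → ℝ)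
    (hp0 : ∀ y, 0 ≤ p y) (hp1 : ∫ y, p y = 1)
    (hsmooth : ContDiff ℝ 4 p)
    (hbdd : ∀ l : List (Fin d), l.length ≤ 4 → ∃ B, ∀ y, |lderiv l p y| ≤ B)
    (a₁ a₂ : ℝ) (ha₁ : 0 < a₁) (ha₂ : 0 < a₂) (hne : a₁ ≠ a₂)
    (c₁ c₂ : ℝ) (hc₁ : c₁ = a₂ ^ 2 / (a₂ ^ 2 - a₁ ^ 2)) (hc₂ : c₂ = -a₁ ^ 2 / (a₂ ^ 2 - a₁ ^ 2))
    (x : EuclideanSpace ℝ (Fin d)) :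
    ∃ C : ℝ, ∀ h : ℝ, 0 < h →
      |c₁ * gaussSmooth d (a₁ * h) p x + c₂ * gaussSmooth d (a₂ * h) p x - p x|
        ≤ C * h ^ 4 := by
  -- bounds on derivatives
  obtain ⟨B0, hB0⟩ := hbdd [] (by norm_num)
  have hB0' : ∀ y, |p y| ≤ B0 := hB0
  have hBex : ∀ k : ℕ, k ≤ 4 → ∃ B : ℝ, 0 ≤ B ∧ ∀ (c : Fin k → Fin d)
      (y : EuclideanSpace ℝ (Fin d)), |lderiv (List.ofFn c) p y| ≤ B := by
    intro k hk
    have hch : ∀ c : Fin k → Fin d, ∃ Bc, ∀ y, |lderiv (List.ofFn c) p y| ≤ Bc :=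
      fun c => hbdd _ (by simp [List.length_ofFn, hk])
    choose Bf hBf using hch
    refine ⟨∑ c, max 0 (Bf c),
      Finset.sum_nonneg (fun c _ => le_max_left 0 _), fun c y => ?_⟩
    calc |lderiv (List.ofFn c) p y| ≤ Bf c := hBf c y
      _ ≤ max 0 (Bf c) := le_max_right _ _
      _ ≤ ∑ c', max 0 (Bf c') :=
          Finset.single_le_sum (fun c' _ => le_max_left 0 (Bf c')) (Finset.mem_univ c)
  obtain ⟨B2, hB2nn, hB2⟩ := hBex 2 (by norm_num)
  obtain ⟨B4, hB4nn, hB4⟩ := hBex 4 (by norm_num)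
  obtain ⟨I, K, hKnn, hkey⟩ := rb_key hsmooth hB2nn hB4nn hB0' hB2 hB4 x
  -- algebraic identities for the weights
  have hden : a₂ ^ 2 - a₁ ^ 2 ≠ 0 := by
    intro hEq
    have h3 : (a₁ - a₂) * (a₁ + a₂) = 0 := by nlinarith
    rcases mul_eq_zero.1 h3 with h4 | h4
    · exact hne (by linarith)
    · linarith
  have hsum : c₁ + c₂ = 1 := by
    rw [hc₁, hc₂]
    field_simp
    ring
  have hmom : c₁ * a₁ ^ 2 + c₂ * a₂ ^ 2 = 0 := by
    rw [hc₁, hc₂]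
    field_simp
    ring
  refine ⟨|c₁| * K * a₁ ^ 4 + |c₂| * K * a₂ ^ 4, fun h hh => ?_⟩
  have h1 := hkey (a₁ * h) (by positivity)
  have h2 := hkey (a₂ * h) (by positivity)
  have hid : c₁ * gaussSmooth d (a₁ * h) p x + c₂ * gaussSmooth d (a₂ * h) p x - p x
      = c₁ * (gaussSmooth d (a₁ * h) p x - p x - (a₁ * h) ^ 2 * I)
        + c₂ * (gaussSmooth d (a₂ * h) p x - p x - (a₂ * h) ^ 2 * I) := by
    linear_combination p x * hsum + h ^ 2 * I * hmom
  rw [hid]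
  calc |c₁ * (gaussSmooth d (a₁ * h) p x - p x - (a₁ * h) ^ 2 * I)
        + c₂ * (gaussSmooth d (a₂ * h) p x - p x - (a₂ * h) ^ 2 * I)|
      ≤ |c₁ * (gaussSmooth d (a₁ * h) p x - p x - (a₁ * h) ^ 2 * I)|
        + |c₂ * (gaussSmooth d (a₂ * h) p x - p x - (a₂ * h) ^ 2 * I)| := abs_add_le _ _
    _ = |c₁| * |gaussSmooth d (a₁ * h) p x - p x - (a₁ * h) ^ 2 * I|
        + |c₂| * |gaussSmooth d (a₂ * h) p x - p x - (a₂ * h) ^ 2 * I| := by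
        rw [abs_mul, abs_mul]
    _ ≤ |c₁| * (K * (a₁ * h) ^ 4) + |c₂| * (K * (a₂ * h) ^ 4) := by
        exact add_le_add (mul_le_mul_of_nonneg_left h1 (abs_nonneg _))
          (mul_le_mul_of_nonneg_left h2 (abs_nonneg _))
    _ = (|c₁| * K * a₁ ^ 4 + |c₂| * K * a₂ ^ 4) * h ^ 4 := by ring
end

section
/- Let d ≥ 1, let p : ℝ^d → ℝ be a bounded probability density function that is continuous at x ∈ ℝ^d, and fix a_1, a_2 > 0. Then lim_{h → 0⁺} h^d ∫_{ℝ^d} K_{a_1 h}(x,y) · K_{a_2 h}(x,y) p(y) dy = p(x) / (2π(a_1² + a_2²))^{d/2}. (This is the leading cross term in the variance of the two-bandwidth Richardson-extrapolated estimator.) -/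
open MeasureTheory Real Filter Topology

open Module Bornology

lemma integral_std_gauss {d : ℕ} :
    ∫ z : EuclideanSpace ℝ (Fin d), Real.exp (-‖z‖ ^ 2 / 2) = Real.sqrt (2 * Real.pi) ^ d := by
  have h := GaussianFourier.integral_rexp_neg_mul_sq_norm (V := EuclideanSpace ℝ (Fin d))
    (b := 1/2) (by norm_num)
  simp only [finrank_euclideanSpace_fin] at h
  have : ∀ z : EuclideanSpace ℝ (Fin d), -‖z‖ ^ 2 / 2 = -(1/2) * ‖z‖ ^ 2 := by intro z; ring
  simp_rw [this, h]
  rw [Real.sqrt_eq_rpow, ← Real.rpow_natCast ((2*Real.pi) ^ ((1:ℝ)/2)) d,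
    ← Real.rpow_mul (by positivity)]
  norm_num
  ring

lemma gk_tendsto {d : ℕ} (p : EuclideanSpace ℝ (Fin d) → ℝ)
    (hp1 : ∫ y, p y = 1) (x : EuclideanSpace ℝ (Fin d)) (hcont : ContinuousAt p x) :
    Tendsto (fun σ : ℝ => ∫ y, gaussKernel d σ x y * p y) (𝓝[>] 0) (𝓝 (p x)) := by
  set C : ℝ := Real.sqrt (2 * Real.pi) ^ d with hC
  have hCpos : 0 < C := by positivity
  set φ : EuclideanSpace ℝ (Fin d) → ℝ := fun z => Real.exp (-‖z‖ ^ 2 / 2) / C with hφdef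
  have hφ : ∀ z, 0 ≤ φ z := fun z => by positivity
  have h'φ : ∫ z, φ z = 1 := by
    simp only [hφdef, integral_div, integral_std_gauss, hC, div_self hCpos.ne']
    exact div_self (by positivity)
  have hdec1 : Tendsto (fun r : ℝ => r ^ d * Real.exp (-r ^ 2 / 2)) atTop (𝓝 0) := by
    have h1 : Tendsto (fun r : ℝ => (r ^ 2 / 2) ^ d * Real.exp (-(r ^ 2 / 2))) atTop (𝓝 0) := by
      apply (tendsto_pow_mul_exp_neg_atTop_nhds_zero d).comp
      exact (tendsto_pow_atTop two_ne_zero).atTop_div_const two_pos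
    apply squeeze_zero' _ _ h1
    · filter_upwards [eventually_ge_atTop (0:ℝ)] with r hr
      positivity
    · filter_upwards [eventually_ge_atTop (2:ℝ)] with r hr
      have h0 : (0:ℝ) ≤ r := by linarith
      have : -(r ^ 2 / 2) = -r ^ 2 / 2 := by ring
      rw [this]
      gcongr
      nlinarith
  have hdecay : Tendsto (fun z : EuclideanSpace ℝ (Fin d) =>
      ‖z‖ ^ finrank ℝ (EuclideanSpace ℝ (Fin d)) * φ z) (cobounded _) (𝓝 0) := by
    simp only [finrank_euclideanSpace_fin, hφdef]
    have : Tendsto (fun r : ℝ => r ^ d * (Real.exp (-r ^ 2 / 2) / C)) atTop (𝓝 0) := by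
      have := hdec1.div_const C
      simpa [mul_div_assoc] using this
    exact this.comp tendsto_norm_cobounded_atTop
  have hg : Integrable p := integrable_of_integral_eq_one hp1
  have main := tendsto_integral_comp_smul_smul_of_integrable' hφ h'φ hdecay hg hcont
  simp only [finrank_euclideanSpace_fin] at main
  have hinv : Tendsto (fun σ : ℝ => σ⁻¹) (𝓝[>] (0:ℝ)) atTop := tendsto_inv_nhdsGT_zero
  apply (main.comp hinv).congr'
  filter_upwards [self_mem_nhdsWithin] with σ (hσ : (0:ℝ) < σ)
  apply integral_congr_ae
  filter_upwards with y
  simp only [Function.comp_apply, smul_eq_mul, hφdef]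
  rw [norm_smul, Real.norm_eq_abs, abs_of_pos (inv_pos.2 hσ), mul_pow]
  have harg : -(σ⁻¹ ^ 2 * ‖x - y‖ ^ 2) / 2 = -‖x - y‖ ^ 2 / (2 * σ ^ 2) := by
    field_simp
  rw [harg, gaussKernel]
  have hσd : σ ^ d ≠ 0 := pow_ne_zero _ hσ.ne'
  have hsq : Real.sqrt 2 * Real.sqrt π = Real.sqrt (π * 2) := by
    rw [← Real.sqrt_mul (by norm_num), mul_comm]
  field_simp
  have hσ1 : (1 / σ) ^ d * σ ^ d = 1 := by rw [one_div, inv_pow, inv_mul_cancel₀ hσd]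
  rw [hC]
  linear_combination (p y * Real.sqrt (2 * π) ^ d) * hσ1

/-- the leading cross term in the variance of the two-bandwidth
Richardson-extrapolated estimator:
`lim_{h→0⁺} h^d ∫ K_{a₁h}(x,y) K_{a₂h}(x,y) p(y) dy = p(x) / (2π(a₁²+a₂²))^{d/2}`. -/
theorem cross_term_limit {d : ℕ} (hd : 1 ≤ d)
    (p : EuclideanSpace ℝ (Fin d) → ℝ) (M : ℝ)
    (hp0 : ∀ y, 0 ≤ p y) (hpm : Measurable p) (hp1 : ∫ y, p y = 1)
    (hpM : ∀ y, p y ≤ M)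
    (x : EuclideanSpace ℝ (Fin d)) (hcont : ContinuousAt p x)
    (a₁ a₂ : ℝ) (ha₁ : 0 < a₁) (ha₂ : 0 < a₂) :
    Tendsto
      (fun h : ℝ => h ^ d * ∫ y, gaussKernel d (a₁ * h) x y * gaussKernel d (a₂ * h) x y * p y)
      (𝓝[>] 0)
      (𝓝 (p x / Real.sqrt (2 * Real.pi * (a₁ ^ 2 + a₂ ^ 2)) ^ d)) := by
  set s : ℝ := Real.sqrt (a₁ ^ 2 + a₂ ^ 2) with hsdef
  have hspos : 0 < s := Real.sqrt_pos.2 (by positivity)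
  have hs2 : s ^ 2 = a₁ ^ 2 + a₂ ^ 2 := Real.sq_sqrt (by positivity)
  set c : ℝ := a₁ * a₂ / s with hcdef
  have hcpos : 0 < c := by positivity
  set B : ℝ := Real.sqrt (2 * Real.pi * (a₁ ^ 2 + a₂ ^ 2)) ^ d with hBdef
  have hB : B = Real.sqrt (2 * Real.pi) ^ d * s ^ d := by
    rw [hBdef, hsdef, ← mul_pow, ← Real.sqrt_mul (by positivity)]
  have hBpos : 0 < B := by rw [hB]; positivity
  have hlin : Tendsto (fun h : ℝ => c * h) (𝓝[>] (0:ℝ)) (𝓝[>] (0:ℝ)) := by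
    apply tendsto_nhdsWithin_of_tendsto_nhds_of_eventually_within
    · have := (continuous_mul_left c).tendsto (0:ℝ)
      simp only [mul_zero] at this
      exact this.mono_left nhdsWithin_le_nhds
    · filter_upwards [self_mem_nhdsWithin] with h (hh : (0:ℝ) < h)
      exact mul_pos hcpos hh
  have main := ((gk_tendsto p hp1 x hcont).comp hlin).div_const B
  apply main.congr'
  filter_upwards [self_mem_nhdsWithin] with h (hh : (0:ℝ) < h)
  simp only [Function.comp_apply]
  rw [← integral_div, ← integral_const_mul]
  apply integral_congr_ae
  filter_upwards with y
  simp only [gaussKernel]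
  have hcs : c ^ d * s ^ d = (a₁ * a₂) ^ d := by
    rw [hcdef, div_pow, div_mul_cancel₀ _ (pow_ne_zero _ hspos.ne')]
  have hc2 : c ^ 2 = a₁ ^ 2 * a₂ ^ 2 / (a₁ ^ 2 + a₂ ^ 2) := by
    rw [hcdef, div_pow, hs2, mul_pow]
  have harg : -‖x - y‖ ^ 2 / (2 * (a₁ * h) ^ 2) + -‖x - y‖ ^ 2 / (2 * (a₂ * h) ^ 2)
      = -‖x - y‖ ^ 2 / (2 * (c * h) ^ 2) := by
    have ha12 : (0:ℝ) < a₁ ^ 2 + a₂ ^ 2 := by positivity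
    rw [mul_pow c h, hc2]
    field_simp
    ring
  rw [div_mul_div_comm, div_mul_eq_mul_div, ← Real.exp_add, harg, mul_pow a₁ h, mul_pow a₂ h,
    mul_pow c h]
  rw [hB]
  have hC : (0:ℝ) < Real.sqrt (2 * Real.pi) ^ d := by positivity
  field_simp
  rw [mul_pow c h]
  have h1 : a₁ ^ d * a₂ ^ d = c ^ d * s ^ d := by rw [hcs, mul_pow]
  clear_value c
  linear_combination (p y * h ^ d) * h1
end

section
/- For every natural number r ≥ 1 and every x ∈ ℝ, the (2r)-th derivative of g(x) = exp(−x²/2) satisfies |g^{(2r)}(x)| ≤ (2r−1)!!, where (2r−1)!! = (2r)!/(2^r r!); that is, the maximum of the absolute value of the (2r)-th derivative of the Gaussian is attained at 0 and equals (2r−1)!!. -/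
open Real Set MeasureTheory Complex FourierTransform
open scoped ContDiff



noncomputable def gg : ℝ → ℝ := fun x => Real.exp (-x ^ 2 / 2)

lemma gg_contDiff : ContDiff ℝ ∞ gg :=
  Real.contDiff_exp.comp ((contDiff_id.pow 2).neg.div_const 2)

lemma itd_add (n : ℕ) {f h : ℝ → ℝ} (hf : ContDiff ℝ ∞ f) (hh : ContDiff ℝ ∞ h) (x : ℝ) :
    iteratedDeriv n (fun y => f y + h y) x = iteratedDeriv n f x + iteratedDeriv n h x := by
  simp only [← iteratedDerivWithin_univ]
  exact iteratedDerivWithin_add (mem_univ x) uniqueDiffOn_univ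
    (hf.of_le (m := (n : WithTop ℕ∞)) (by exact_mod_cast le_top)).contDiffWithinAt
    (hh.of_le (m := (n : WithTop ℕ∞)) (by exact_mod_cast le_top)).contDiffWithinAt

lemma deriv_id_mul {f : ℝ → ℝ} (hf : ContDiff ℝ ∞ f) :
    deriv (fun y => y * f y) = fun y => f y + y * deriv f y := by
  funext y
  have h1 : HasDerivAt (fun y : ℝ => y * f y) (1 * f y + y * deriv f y) y :=
    (hasDerivAt_id y).mul ((hf.differentiable (by simp) y).hasDerivAt)
  simpa using h1.deriv

lemma itd_id_mul : ∀ (n : ℕ) (f : ℝ → ℝ), ContDiff ℝ ∞ f → ∀ x : ℝ,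
    iteratedDeriv (n + 1) (fun y => y * f y) x
      = x * iteratedDeriv (n + 1) f x + (n + 1) * iteratedDeriv n f x := by
  intro n
  induction n with
  | zero =>
    intro f hf x
    simp only [zero_add, iteratedDeriv_one, iteratedDeriv_zero, deriv_id_mul hf]
    push_cast; ring
  | succ n ih =>
    intro f hf x
    have hf' : ContDiff ℝ ∞ (deriv f) := (contDiff_infty_iff_deriv.mp hf).2
    have hmul : ContDiff ℝ ∞ (fun y : ℝ => y * deriv f y) := contDiff_id.mul hf'
    rw [iteratedDeriv_succ' (n := n + 1), deriv_id_mul hf,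
      itd_add (n + 1) hf hmul x, ih (deriv f) hf' x,
      ← iteratedDeriv_succ' (n := n + 1), ← iteratedDeriv_succ' (n := n)]
    push_cast
    ring

lemma deriv_gg : deriv gg = fun y => y * (-gg y) := by
  funext y
  have h1 : HasDerivAt gg (Real.exp (-y ^ 2 / 2) * (-(2 * y) / 2)) y := by
    have h2 : HasDerivAt (fun x : ℝ => -x ^ 2 / 2) (-(2 * y) / 2) y := by
      simpa using ((hasDerivAt_pow 2 y).neg.div_const 2)
    exact (Real.hasDerivAt_exp _).comp y h2
  rw [h1.deriv]
  show Real.exp (-y ^ 2 / 2) * (-(2 * y) / 2) = y * (-Real.exp (-y ^ 2 / 2))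
  ring

lemma gg_rec (n : ℕ) : iteratedDeriv (n + 2) gg 0 = -((n : ℝ) + 1) * iteratedDeriv n gg 0 := by
  have h : ContDiff ℝ ∞ (fun y => -gg y) := gg_contDiff.neg
  have h0 : iteratedDeriv (n + 2) gg 0 = iteratedDeriv (n + 1) (deriv gg) 0 := by
    rw [← iteratedDeriv_succ']
  rw [h0, deriv_gg, itd_id_mul n _ h 0]
  simp only [iteratedDeriv_fun_neg]
  ring

lemma gg_val (r : ℕ) :
    iteratedDeriv (2 * r) gg 0 = (-1) ^ r * ((2 * r).factorial / (2 ^ r * r.factorial) : ℝ) := by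
  induction r with
  | zero => simp [gg]
  | succ r ih =>
    have h2 : 2 * (r + 1) = 2 * r + 2 := by ring
    rw [h2, gg_rec (2 * r), ih]
    have e1 : (2 * r + 2).factorial = (2 * r + 2) * ((2 * r + 1) * (2 * r).factorial) := by
      rw [show 2 * r + 2 = (2 * r + 1) + 1 from rfl, Nat.factorial_succ, Nat.factorial_succ]
    rw [e1, Nat.factorial_succ]
    have hfac : ((2 * r).factorial : ℝ) ≠ 0 := Nat.cast_ne_zero.mpr (2 * r).factorial_ne_zero
    have hrfac : ((r).factorial : ℝ) ≠ 0 := Nat.cast_ne_zero.mpr r.factorial_ne_zero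
    have h2r : (2 : ℝ) ^ r ≠ 0 := by positivity
    push_cast
    field_simp
    ring


lemma key_ineq (b : ℝ) (hb : 0 < b) (n : ℕ) (x : ℝ) :
    |x| ^ n * Real.exp (-b * x ^ 2) ≤
      Real.exp (-b * x ^ 2) + (n.factorial * (2 / b) ^ n) * Real.exp (-(b / 2) * x ^ 2) := by
  have hE2 : (0:ℝ) ≤ (n.factorial * (2 / b) ^ n) * Real.exp (-(b / 2) * x ^ 2) := by positivity
  rcases le_or_gt |x| 1 with h | h
  · have h1 : |x| ^ n ≤ 1 := pow_le_one₀ (abs_nonneg x) h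
    nlinarith [Real.exp_pos (-b * x ^ 2)]
  · have h1 : |x| ^ n ≤ (x ^ 2) ^ n := by
      calc |x| ^ n ≤ (|x| ^ 2) ^ n := by
            apply pow_le_pow_left₀ (abs_nonneg x)
            nlinarith
        _ = (x ^ 2) ^ n := by rw [_root_.sq_abs]
    have h2 : (b / 2 * x ^ 2) ^ n / n.factorial ≤ Real.exp (b / 2 * x ^ 2) :=
      Real.pow_div_factorial_le_exp _ (by positivity) n
    have h3 : (x ^ 2) ^ n ≤ n.factorial * (2 / b) ^ n * Real.exp (b / 2 * x ^ 2) := by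
      have hfn : (0:ℝ) < n.factorial := by exact_mod_cast n.factorial_pos
      have hbn : (0:ℝ) < (b / 2) ^ n := by positivity
      have e : (b / 2 * x ^ 2) ^ n = (b / 2) ^ n * (x ^ 2) ^ n := by rw [mul_pow]
      rw [e] at h2
      rw [div_le_iff₀ hfn] at h2
      have e2 : (2 / b) ^ n = ((b / 2) ^ n)⁻¹ := by
        rw [← inv_pow]; congr 1; field_simp
      rw [e2]
      have hinv : (0:ℝ) < ((b / 2) ^ n)⁻¹ := by positivity
      have hcan : ((b / 2) ^ n)⁻¹ * (b / 2) ^ n = 1 := inv_mul_cancel₀ hbn.ne'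
      calc (x ^ 2) ^ n = (((b / 2) ^ n)⁻¹ * (b / 2) ^ n) * (x ^ 2) ^ n := by
            rw [hcan, one_mul]
        _ = ((b / 2) ^ n)⁻¹ * ((b / 2) ^ n * (x ^ 2) ^ n) := by ring
        _ ≤ ((b / 2) ^ n)⁻¹ * (Real.exp (b / 2 * x ^ 2) * n.factorial) :=
            mul_le_mul_of_nonneg_left h2 hinv.le
        _ = (n.factorial : ℝ) * ((b / 2) ^ n)⁻¹ * Real.exp (b / 2 * x ^ 2) := by ring
    have h4 : Real.exp (b / 2 * x ^ 2) * Real.exp (-b * x ^ 2) = Real.exp (-(b / 2) * x ^ 2) := by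
      rw [← Real.exp_add]; ring_nf
    have hE1 : (0:ℝ) < Real.exp (-b * x ^ 2) := Real.exp_pos _
    calc |x| ^ n * Real.exp (-b * x ^ 2)
        ≤ (n.factorial * (2 / b) ^ n * Real.exp (b / 2 * x ^ 2)) * Real.exp (-b * x ^ 2) := by
          exact mul_le_mul_of_nonneg_right (h1.trans h3) hE1.le
      _ = (n.factorial * (2 / b) ^ n) * Real.exp (-(b / 2) * x ^ 2) := by
          rw [mul_assoc, h4]
      _ ≤ _ := by nlinarith

lemma integrable_pow_smul_gauss (b : ℝ) (hb : 0 < b) (c : ℂ) (n : ℕ) :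
    Integrable (fun x : ℝ => x ^ n • (c * Complex.exp (-(b : ℂ) * (x : ℂ) ^ 2))) := by
  have hcont : Continuous (fun x : ℝ => x ^ n • (c * Complex.exp (-(b : ℂ) * (x : ℂ) ^ 2))) := by
    apply (continuous_pow n).smul
    exact continuous_const.mul (Complex.continuous_exp.comp
      (continuous_const.mul (Complex.continuous_ofReal.pow 2)))
  have hint : Integrable (fun x : ℝ => ‖c‖ * Real.exp (-b * x ^ 2) +
      ‖c‖ * ((n.factorial * (2 / b) ^ n) * Real.exp (-(b / 2) * x ^ 2))) := by
    exact ((integrable_exp_neg_mul_sq hb).const_mul ‖c‖).add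
      (((integrable_exp_neg_mul_sq (half_pos hb)).const_mul _).const_mul ‖c‖)
  refine hint.mono' hcont.aestronglyMeasurable ?_
  filter_upwards with x
  have hnorm : ‖x ^ n • (c * Complex.exp (-(b : ℂ) * (x : ℂ) ^ 2))‖
      = |x| ^ n * (‖c‖ * Real.exp (-b * x ^ 2)) := by
    rw [norm_smul, norm_mul, norm_cexp_neg_mul_sq]
    simp [abs_pow]
  rw [hnorm]
  have := key_ineq b hb n x
  nlinarith [mul_le_mul_of_nonneg_left (key_ineq b hb n x) (norm_nonneg c)]

noncomputable def ff : ℝ → ℂ :=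
  fun ξ => (Real.sqrt (2 * π) : ℂ) * Complex.exp (-(π : ℂ) * (2 * π) * (ξ : ℂ) ^ 2)

lemma ff_eq (ξ : ℝ) : ff ξ = (Real.sqrt (2 * π) : ℂ)
    * Complex.exp (-((2 * π ^ 2 : ℝ) : ℂ) * (ξ : ℂ) ^ 2) := by
  unfold ff
  congr 2
  push_cast
  ring

lemma ff_integrable (n : ℕ) : Integrable (fun x : ℝ => x ^ n • ff x) := by
  have h := integrable_pow_smul_gauss (2 * π ^ 2) (by positivity) (Real.sqrt (2 * π) : ℂ) n
  apply h.congr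
  filter_upwards with x
  rw [ff_eq]

lemma fourier_ff : 𝓕 ff = fun x : ℝ => (Real.exp (-x ^ 2 / 2) : ℂ) := by
  have hb : 0 < ((2 * π : ℝ) : ℂ).re := by rw [Complex.ofReal_re]; positivity
  have hgauss := fourier_gaussian_pi (b := ((2 * π : ℝ) : ℂ)) hb
  have hsmul : 𝓕 ff = fun t => (Real.sqrt (2 * π) : ℂ) *
      (𝓕 (fun x : ℝ => Complex.exp (-(π : ℂ) * ((2 * π : ℝ) : ℂ) * (x : ℂ) ^ 2)) t) := by
    funext t
    rw [Real.fourier_eq, Real.fourier_eq, ← integral_const_mul]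
    congr 1
    funext v
    unfold ff
    push_cast
    simp only [Circle.smul_def, smul_eq_mul]
    ring
  rw [hsmul, hgauss]
  funext t
  have hsqrt : ((2 * π : ℝ) : ℂ) ^ (1 / 2 : ℂ) = (Real.sqrt (2 * π) : ℂ) := by
    rw [show (1 / 2 : ℂ) = ((1 / 2 : ℝ) : ℂ) by norm_num,
      ← Complex.ofReal_cpow (by positivity), Real.sqrt_eq_rpow]
  have hne : (Real.sqrt (2 * π) : ℂ) ≠ 0 := by
    simp only [ne_eq, Complex.ofReal_eq_zero]
    positivity
  simp only [hsqrt]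
  have hπ : (π : ℂ) ≠ 0 := by exact_mod_cast Real.pi_ne_zero
  rw [show -((π : ℂ)) / ((2 * π : ℝ) : ℂ) * (t : ℂ) ^ 2 = -(t : ℂ) ^ 2 / 2 by
    push_cast
    field_simp]
  rw [← mul_assoc, mul_one_div, div_self hne, one_mul]
  rw [Complex.ofReal_exp]
  push_cast
  ring_nf

noncomputable def HH (r : ℕ) : ℝ → ℝ :=
  fun x => (2 * π * x) ^ (2 * r) * (Real.sqrt (2 * π) * Real.exp (-(2 * π ^ 2) * x ^ 2))

lemma HH_nonneg (r : ℕ) (x : ℝ) : 0 ≤ HH r x := by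
  unfold HH
  apply mul_nonneg
  · rw [pow_mul]; positivity
  · positivity

lemma h_eq (r : ℕ) (x : ℝ) :
    (-2 * π * Complex.I * x) ^ (2 * r) • ff x = (-1 : ℂ) ^ r * ((HH r x : ℝ) : ℂ) := by
  rw [ff_eq]
  have e1 : ((-2 * π * Complex.I * x : ℂ)) ^ (2 * r)
      = (-1 : ℂ) ^ r * (((2 * π * x : ℝ) : ℂ)) ^ (2 * r) := by
    rw [pow_mul, pow_mul, ← mul_pow]
    congr 1
    have h5 : (Complex.I : ℂ) ^ 2 = -1 := Complex.I_sq
    push_cast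
    linear_combination (4 * (π : ℂ) ^ 2 * (x : ℂ) ^ 2) * h5
  rw [smul_eq_mul, e1]
  unfold HH
  push_cast
  ring

lemma h_integrable (r : ℕ) :
    Integrable (fun x : ℝ => (-2 * π * Complex.I * x) ^ (2 * r) • ff x) := by
  have he : (fun x : ℝ => (-2 * π * Complex.I * x) ^ (2 * r) • ff x)
      = fun x : ℝ => ((-2 * π * Complex.I) ^ (2 * r)) * ((x : ℝ) ^ (2 * r) • ff x) := by
    funext x
    simp only [smul_eq_mul, Complex.real_smul]
    push_cast
    ring
  rw [he]
  exact (ff_integrable (2 * r)).const_mul _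

lemma fourier_deriv_bound (r : ℕ) (x : ℝ) :
    ‖iteratedDeriv (2 * r) (𝓕 ff) x‖ ≤ ‖iteratedDeriv (2 * r) (𝓕 ff) 0‖ := by
  have hder : iteratedDeriv (2 * r) (𝓕 ff)
      = 𝓕 (fun x : ℝ => (-2 * π * Complex.I * x) ^ (2 * r) • ff x) :=
    Real.iteratedDeriv_fourier (N := ((2 * r : ℕ) : ℕ∞))
      (fun n _ => ff_integrable n) le_rfl
  set h : ℝ → ℂ := fun x : ℝ => (-2 * π * Complex.I * x) ^ (2 * r) • ff x with hh
  rw [hder]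
  have b1 : ‖𝓕 h x‖ ≤ ∫ v, ‖h v‖ :=
    VectorFourier.norm_fourierIntegral_le_integral_norm 𝐞 volume (innerₗ ℝ) h x
  have b4 : ∀ v : ℝ, ‖h v‖ = HH r v := by
    intro v
    rw [hh]
    simp only
    rw [h_eq r v, norm_mul, norm_pow, norm_neg, norm_one, one_pow, one_mul,
      Complex.norm_real, Real.norm_eq_abs, _root_.abs_of_nonneg (HH_nonneg r v)]
  have b2 : 𝓕 h 0 = ∫ v, h v := by
    rw [Real.fourier_eq]
    simp
  have b3 : (∫ v, h v) = (-1 : ℂ) ^ r * (((∫ v, HH r v : ℝ)) : ℂ) := by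
    have : (∫ v, h v) = ∫ v, (-1 : ℂ) ^ r * ((HH r v : ℝ) : ℂ) := by
      congr 1
      funext v
      rw [hh]
      simp only
      rw [h_eq]
    rw [this, integral_const_mul]
    congr 1
    exact integral_ofReal
  have b5 : ‖𝓕 h 0‖ = ∫ v, HH r v := by
    rw [b2, b3, norm_mul, norm_pow, norm_neg, norm_one, one_pow, one_mul,
      Complex.norm_real, Real.norm_eq_abs,
      _root_.abs_of_nonneg (integral_nonneg (fun v => HH_nonneg r v))]
  rw [b5]
  calc ‖𝓕 h x‖ ≤ ∫ v, ‖h v‖ := b1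
    _ = ∫ v, HH r v := by congr 1; funext v; rw [b4]

lemma abs_itd (n : ℕ) (x : ℝ) :
    |iteratedDeriv n gg x| = ‖iteratedDeriv n (fun y : ℝ => ((Real.exp (-y ^ 2 / 2) : ℝ) : ℂ)) x‖ := by
  have h1 : ‖iteratedFDeriv ℝ n ((RCLike.ofRealLI (K := ℂ)) ∘ gg) x‖
      = ‖iteratedFDeriv ℝ n gg x‖ :=
    (RCLike.ofRealLI (K := ℂ)).norm_iteratedFDeriv_comp_left gg_contDiff.contDiffAt (i := n) (by exact_mod_cast le_top)
  have h2 : ((RCLike.ofRealLI (K := ℂ)) ∘ gg) = fun y : ℝ => ((Real.exp (-y ^ 2 / 2) : ℝ) : ℂ) := by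
    funext y
    simp [RCLike.ofRealLI_apply, gg]
  rw [← h2, ← norm_iteratedFDeriv_eq_norm_iteratedDeriv, h1,
    norm_iteratedFDeriv_eq_norm_iteratedDeriv, Real.norm_eq_abs]

/-- the `(2r)`-th derivative of the Gaussian `g(x) = exp(−x²/2)` is
bounded in absolute value by `(2r−1)!! = (2r)!/(2^r r!)`, the value at `0`. -/
theorem gaussian_iteratedDeriv_bound (r : ℕ) (hr : 1 ≤ r) (x : ℝ) :
    |iteratedDeriv (2 * r) (fun x : ℝ => Real.exp (-x ^ 2 / 2)) x| ≤
      ((2 * r).factorial / (2 ^ r * r.factorial) : ℝ) := by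
  have hgg : (fun x : ℝ => Real.exp (-x ^ 2 / 2)) = gg := rfl
  rw [hgg]
  have step1 : |iteratedDeriv (2 * r) gg x| ≤ |iteratedDeriv (2 * r) gg 0| := by
    rw [abs_itd, abs_itd]
    rw [show (fun y : ℝ => ((Real.exp (-y ^ 2 / 2) : ℝ) : ℂ)) = 𝓕 ff from fourier_ff.symm]
    exact fourier_deriv_bound r x
  refine step1.trans_eq ?_
  rw [gg_val r, abs_mul, _root_.abs_pow, abs_neg, abs_one, one_pow, one_mul,
    _root_.abs_of_nonneg (by positivity : (0:ℝ) ≤ ((2 * r).factorial / (2 ^ r * r.factorial) : ℝ))]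
end
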